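/- Let p ∈ ℕ and h : 𝔻 → 𝔻 be a finite Blaschke product of degree 1 ≤ deg(h) ≤ p. Then there exists an increasing function η = η_p : (0,∞) → (0,∞) with η(t) → 0 as t → 0⁺, depending only on p, with the following property: if A ⊆ 𝔻 is a connected set with 0 ∈ A and h(A) is contained in the closed hyperbolic ball of radius R > 0 centered at 0, then A is contained in the closed hyperbolic ball of radius η(R) centered at 0. -/

import Mathlib

open Complex

/-- The closed hyperbolic ball of radius `R` centered at `0` in the unit disk, for the
hyperbolic metric `ds = 2|du|/(1−|u|²)`: it consists of `z` with `|z| ≤ tanh(R/2)`. -/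
def hBall (R : ℝ) : Set ℂ := {z : ℂ | ‖z‖ ≤ Real.tanh (R / 2)}

open Real

namespace Stmt17Aux

lemma neg_one_lt_tanh (x : ℝ) : -1 < Real.tanh x := by
  rw [Real.tanh_eq_sinh_div_cosh, neg_lt, ← neg_div, div_lt_one (Real.cosh_pos x)]
  nlinarith [Real.cosh_add_sinh x, Real.exp_pos x]

lemma tanh_lt_one (x : ℝ) : Real.tanh x < 1 := by
  rw [Real.tanh_eq_sinh_div_cosh, div_lt_one (Real.cosh_pos x)]
  nlinarith [Real.cosh_sub_sinh x, Real.exp_pos (-x)]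

lemma tanh_le_tanh {x y : ℝ} (h : x ≤ y) : Real.tanh x ≤ Real.tanh y := by
  rw [Real.tanh_eq_sinh_div_cosh, Real.tanh_eq_sinh_div_cosh,
    div_le_div_iff₀ (Real.cosh_pos x) (Real.cosh_pos y)]
  nlinarith [Real.sinh_sub y x, Real.sinh_nonneg_iff.2 (sub_nonneg.2 h)]

lemma tanh_nonneg {x : ℝ} (hx : 0 ≤ x) : 0 ≤ Real.tanh x := by
  simpa using tanh_le_tanh hx

lemma tanh_pos {x : ℝ} (hx : 0 < x) : 0 < Real.tanh x := by
  rw [Real.tanh_eq_sinh_div_cosh]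
  exact div_pos (Real.sinh_pos_iff.2 hx) (Real.cosh_pos x)

lemma tanh_add (s t : ℝ) :
    Real.tanh (s + t) = (Real.tanh s + Real.tanh t) / (1 + Real.tanh s * Real.tanh t) := by
  have h1 : (0:ℝ) < 1 + Real.tanh s * Real.tanh t := by
    nlinarith [neg_one_lt_tanh s, neg_one_lt_tanh t, tanh_lt_one s, tanh_lt_one t]
  rw [Real.tanh_eq_sinh_div_cosh, Real.tanh_eq_sinh_div_cosh, Real.tanh_eq_sinh_div_cosh,
    Real.sinh_add, Real.cosh_add]
  have hcs := (Real.cosh_pos s).ne'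
  have hct := (Real.cosh_pos t).ne'
  have h2 : Real.cosh s * Real.cosh t + Real.sinh s * Real.sinh t ≠ 0 := by
    have : 1 + Real.sinh s / Real.cosh s * (Real.sinh t / Real.cosh t) > 0 := by
      rw [← Real.tanh_eq_sinh_div_cosh, ← Real.tanh_eq_sinh_div_cosh]; exact h1
    intro hz
    rw [div_mul_div_comm] at this
    have hcc : (0:ℝ) < Real.cosh s * Real.cosh t := mul_pos (Real.cosh_pos s) (Real.cosh_pos t)
    have h3 : Real.sinh s * Real.sinh t = -(Real.cosh s * Real.cosh t) := by linarith
    rw [h3, neg_div, div_self hcc.ne'] at this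
    linarith
  field_simp
  

noncomputable def ath (x : ℝ) : ℝ := Real.log ((1 + x) / (1 - x)) / 2

lemma tanh_eq_exp (y : ℝ) : Real.tanh y = (rexp (2 * y) - 1) / (rexp (2 * y) + 1) := by
  rw [Real.tanh_eq_sinh_div_cosh, Real.sinh_eq, Real.cosh_eq]
  have h : rexp (2 * y) = rexp y * rexp y := by rw [two_mul, Real.exp_add]
  have h2 : rexp (-y) = (rexp y)⁻¹ := Real.exp_neg y
  have h3 := (Real.exp_pos y).ne'
  rw [h, h2]
  field_simp

lemma tanh_ath {x : ℝ} (h0 : -1 < x) (h1 : x < 1) : Real.tanh (ath x) = x := by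
  have hu : (0:ℝ) < (1 + x) / (1 - x) := by
    apply div_pos <;> linarith
  have h2 : rexp (2 * ath x) = (1 + x) / (1 - x) := by
    rw [ath, show 2 * (Real.log ((1+x)/(1-x)) / 2) = Real.log ((1+x)/(1-x)) by ring,
      Real.exp_log hu]
  rw [tanh_eq_exp, h2]
  have : (1:ℝ) - x ≠ 0 := by linarith
  field_simp
  ring

lemma ath_nonneg {x : ℝ} (h0 : 0 ≤ x) (h1 : x < 1) : 0 ≤ ath x := by
  have : (1:ℝ) ≤ (1 + x) / (1 - x) := by
    rw [le_div_iff₀ (by linarith)]; linarith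
  have := Real.log_nonneg this
  unfold ath; linarith

lemma ath_pos {x : ℝ} (h0 : 0 < x) (h1 : x < 1) : 0 < ath x := by
  have : (1:ℝ) < (1 + x) / (1 - x) := by
    rw [lt_div_iff₀ (by linarith)]; linarith
  have := Real.log_pos this
  unfold ath; linarith

lemma ath_le_ath {x y : ℝ} (h0 : -1 < x) (h : x ≤ y) (h1 : y < 1) : ath x ≤ ath y := by
  have hx1 : x < 1 := lt_of_le_of_lt h h1
  have hy0 : -1 < y := lt_of_lt_of_le h0 h
  have hden : (0:ℝ) < 1 - x := by linarith
  have hdeny : (0:ℝ) < 1 - y := by linarith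
  have hnum : (0:ℝ) < 1 + x := by linarith
  have hle : (1 + x) / (1 - x) ≤ (1 + y) / (1 - y) := by
    rw [div_le_div_iff₀ hden hdeny]; nlinarith
  have := Real.log_le_log (div_pos hnum hden) hle
  unfold ath; linarith

lemma ath_zero : ath 0 = 0 := by simp [ath]

lemma continuousAt_ath0 : ContinuousAt ath 0 := by
  apply ContinuousAt.div_const
  apply Real.continuousAt_log ?_ |>.comp
  · exact (continuousAt_const.add continuousAt_id).div (continuousAt_const.sub continuousAt_id)
      (by norm_num)
  · norm_num


open Complex

noncomputable def pd (z w : ℂ) : ℝ := ‖(z - w) / (1 - (starRingEnd ℂ) w * z)‖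

lemma den_ne {z w : ℂ} (hz : ‖z‖ < 1) (hw : ‖w‖ < 1) :
    (1 : ℂ) - (starRingEnd ℂ) w * z ≠ 0 := by
  intro h
  have h1 : (starRingEnd ℂ) w * z = 1 := by linear_combination -h
  have h2 : ‖(starRingEnd ℂ) w * z‖ = 1 := by rw [h1]; simp
  rw [norm_mul, Complex.norm_conj] at h2
  nlinarith [norm_nonneg w, norm_nonneg z]

lemma key_normSq (z w : ℂ) : Complex.normSq (1 - (starRingEnd ℂ) w * z) -
    Complex.normSq (z - w) = (1 - Complex.normSq w) * (1 - Complex.normSq z) := by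
  simp only [Complex.normSq_apply, Complex.sub_re, Complex.sub_im, Complex.mul_re,
    Complex.mul_im, Complex.conj_re, Complex.conj_im, Complex.one_re, Complex.one_im]
  ring

lemma normSq_lt_one {z : ℂ} (hz : ‖z‖ < 1) : Complex.normSq z < 1 := by
  rw [← Complex.sq_norm]
  nlinarith [norm_nonneg z]

lemma pd_nonneg (z w : ℂ) : 0 ≤ pd z w := norm_nonneg _

lemma pd_lt_one {z w : ℂ} (hz : ‖z‖ < 1) (hw : ‖w‖ < 1) :
    pd z w < 1 := by
  have h1 : Complex.normSq (z - w) < Complex.normSq (1 - (starRingEnd ℂ) w * z) := by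
    have := key_normSq z w
    nlinarith [normSq_lt_one hz, normSq_lt_one hw]
  have h2 : ‖z - w‖ < ‖1 - (starRingEnd ℂ) w * z‖ := by
    rw [Complex.norm_def, Complex.norm_def]
    exact Real.sqrt_lt_sqrt (Complex.normSq_nonneg _) h1
  have h3 : 0 < ‖1 - (starRingEnd ℂ) w * z‖ :=
    lt_of_le_of_lt (norm_nonneg _) h2
  rw [pd, norm_div, div_lt_one h3]
  exact h2

lemma pd_symm (z w : ℂ) : pd z w = pd w z := by
  rw [pd, pd, norm_div, norm_div, norm_sub_rev]
  congr 1
  rw [← Complex.norm_conj (1 - (starRingEnd ℂ) w * z)]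
  congr 1
  simp only [map_sub, map_one, map_mul, Complex.conj_conj]
  ring

lemma pd_zero_left (w : ℂ) : pd 0 w = ‖w‖ := by
  simp [pd]

lemma pd_zero_right (w : ℂ) : pd w 0 = ‖w‖ := by
  simp [pd]

set_option maxHeartbeats 1000000 in
lemma basic_ineq {A C : ℂ} (hA : ‖A‖ < 1) (hC : ‖C‖ < 1) :
    ‖(A - C) / (1 - (starRingEnd ℂ) C * A)‖ ≤
      (‖A‖ + ‖C‖) / (1 + ‖A‖ * ‖C‖) := by
  set P := ‖A‖ with hPdef
  set Q := ‖C‖ with hQdef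
  have hP0 : 0 ≤ P := norm_nonneg A
  have hQ0 : 0 ≤ Q := norm_nonneg C
  set x := ((starRingEnd ℂ) C * A).re with hxdef
  set y := ((starRingEnd ℂ) C * A).im with hydef
  have hP2 : P ^ 2 = A.re ^ 2 + A.im ^ 2 := by
    rw [hPdef, Complex.sq_norm, Complex.normSq_apply]; ring
  have hQ2 : Q ^ 2 = C.re ^ 2 + C.im ^ 2 := by
    rw [hQdef, Complex.sq_norm, Complex.normSq_apply]; ring
  have hx2 : x = C.re * A.re + C.im * A.im := by
    rw [hxdef, Complex.mul_re, Complex.conj_re, Complex.conj_im]; ring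
  have hy2 : y = C.re * A.im - C.im * A.re := by
    rw [hydef, Complex.mul_im, Complex.conj_re, Complex.conj_im]; ring
  have hPQ : x ^ 2 + y ^ 2 = P ^ 2 * Q ^ 2 := by
    rw [hx2, hy2, hP2, hQ2]; ring
  have hnum : ‖A - C‖ ^ 2 = P ^ 2 + Q ^ 2 - 2 * x := by
    rw [Complex.sq_norm, Complex.normSq_apply, hP2, hQ2, hx2]
    simp only [Complex.sub_re, Complex.sub_im]; ring
  have hden2 : ‖1 - (starRingEnd ℂ) C * A‖ ^ 2 = 1 - 2 * x + P ^ 2 * Q ^ 2 := by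
    rw [Complex.sq_norm, Complex.normSq_apply, ← hPQ]
    simp only [Complex.sub_re, Complex.sub_im, Complex.one_re, Complex.one_im, ← hxdef, ← hydef]
    ring
  have hx2' : x ^ 2 ≤ (P * Q) ^ 2 := by nlinarith [sq_nonneg y]
  have habsx : |x| ≤ P * Q := by
    have h := Real.sqrt_le_sqrt hx2'
    rwa [Real.sqrt_sq_eq_abs, Real.sqrt_sq_eq_abs, _root_.abs_of_nonneg (mul_nonneg hP0 hQ0)] at h
  have hxpq : -(P * Q) ≤ x := le_trans (neg_le_neg habsx) (neg_abs_le x)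
  have hxle : x ≤ P * Q := le_trans (le_abs_self x) habsx
  have hPQ1 : P * Q < 1 := lt_of_le_of_lt (mul_le_of_le_one_right hP0 hC.le) hA
  have hdenpos : 0 < ‖1 - (starRingEnd ℂ) C * A‖ := by
    nlinarith [norm_nonneg (1 - (starRingEnd ℂ) C * A), sq_nonneg (1 - P * Q)]
  rw [norm_div, div_le_div_iff₀ hdenpos (by nlinarith : (0:ℝ) < 1 + P * Q)]
  have hL0 : 0 ≤ ‖A - C‖ * (1 + P * Q) :=
    mul_nonneg (norm_nonneg _) (by nlinarith)
  have hR0 : 0 ≤ (P + Q) * ‖1 - (starRingEnd ℂ) C * A‖ :=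
    mul_nonneg (by linarith) hdenpos.le
  have hsq : (‖A - C‖ * (1 + P * Q)) ^ 2 ≤
      ((P + Q) * ‖1 - (starRingEnd ℂ) C * A‖) ^ 2 := by
    rw [mul_pow, mul_pow, hnum, hden2]
    have hid : (P + Q) ^ 2 * (1 - 2 * x + P ^ 2 * Q ^ 2) -
        (P ^ 2 + Q ^ 2 - 2 * x) * (1 + P * Q) ^ 2 =
        2 * (x + P * Q) * (1 - P ^ 2) * (1 - Q ^ 2) := by ring
    nlinarith [hid, mul_nonneg (mul_nonneg (by linarith : (0:ℝ) ≤ 2 * (x + P * Q))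
      (by nlinarith : (0:ℝ) ≤ 1 - P ^ 2)) (by nlinarith : (0:ℝ) ≤ 1 - Q ^ 2)]
  calc ‖A - C‖ * (1 + P * Q)
      = Real.sqrt ((‖A - C‖ * (1 + P * Q)) ^ 2) := (Real.sqrt_sq hL0).symm
    _ ≤ Real.sqrt (((P + Q) * ‖1 - (starRingEnd ℂ) C * A‖) ^ 2) :=
        Real.sqrt_le_sqrt hsq
    _ = (P + Q) * ‖1 - (starRingEnd ℂ) C * A‖ := Real.sqrt_sq hR0

lemma einstein_mono {x y x' y' : ℝ} (hx : 0 ≤ x) (hy : 0 ≤ y) (hx' : x ≤ x') (hy' : y ≤ y')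
    (h1 : x' < 1) (h2 : y' < 1) : (x + y) / (1 + x * y) ≤ (x' + y') / (1 + x' * y') := by
  have hx'0 : 0 ≤ x' := le_trans hx hx'
  have hy'0 : 0 ≤ y' := le_trans hy hy'
  rw [div_le_div_iff₀ (by nlinarith) (by nlinarith)]
  nlinarith [mul_nonneg (sub_nonneg.2 hx') (by nlinarith : (0:ℝ) ≤ 1 - y * y'),
    mul_nonneg (sub_nonneg.2 hy') (by nlinarith : (0:ℝ) ≤ 1 - x * x')]

lemma pd_triangle {a b c : ℂ} (ha : ‖a‖ < 1) (hb : ‖b‖ < 1)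
    (hc : ‖c‖ < 1) {s t : ℝ} (hs : 0 ≤ s) (ht : 0 ≤ t)
    (h1 : pd a b ≤ Real.tanh s) (h2 : pd b c ≤ Real.tanh t) :
    pd a c ≤ Real.tanh (s + t) := by
  set A : ℂ := (a - b) / (1 - (starRingEnd ℂ) b * a) with hAdef
  set C : ℂ := (c - b) / (1 - (starRingEnd ℂ) b * c) with hCdef
  have hAab : ‖A‖ = pd a b := rfl
  have hCcb : ‖C‖ = pd c b := rfl
  have hAlt : ‖A‖ < 1 := by rw [hAab]; exact pd_lt_one ha hb
  have hClt : ‖C‖ < 1 := by rw [hCcb]; exact pd_lt_one hc hb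
  have hd1 : (1 : ℂ) - (starRingEnd ℂ) b * a ≠ 0 := den_ne ha hb
  have hd2 : (1 : ℂ) - (starRingEnd ℂ) b * c ≠ 0 := den_ne hc hb
  have hd3 : (1 : ℂ) - (starRingEnd ℂ) c * a ≠ 0 := den_ne ha hc
  have hd4 : (1 : ℂ) - b * (starRingEnd ℂ) c ≠ 0 := by
    intro h
    apply hd2
    have := congrArg (starRingEnd ℂ) h
    simpa only [map_sub, map_one, map_mul, Complex.conj_conj, map_zero, mul_comm] using this
  have hdb : (1 : ℂ) - (starRingEnd ℂ) b * b ≠ 0 := den_ne hb hb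
  have hconjC : (starRingEnd ℂ) C = ((starRingEnd ℂ) c - (starRingEnd ℂ) b) /
      (1 - b * (starRingEnd ℂ) c) := by
    rw [hCdef, map_div₀]
    congr 1
    · rw [map_sub]
    · simp only [map_sub, map_one, map_mul, Complex.conj_conj]
      try ring
  have e1 : A - C = (a - c) * (1 - (starRingEnd ℂ) b * b) /
      ((1 - (starRingEnd ℂ) b * a) * (1 - (starRingEnd ℂ) b * c)) := by
    rw [hAdef, hCdef, div_sub_div _ _ hd1 hd2]; congr 1; ring
  have e2 : 1 - (starRingEnd ℂ) C * A = (1 - (starRingEnd ℂ) c * a) *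
      (1 - (starRingEnd ℂ) b * b) / ((1 - b * (starRingEnd ℂ) c) *
      (1 - (starRingEnd ℂ) b * a)) := by
    rw [hconjC, hAdef, div_mul_div_comm, one_sub_div (mul_ne_zero hd4 hd1)]; congr 1; ring
  have h24 : ‖1 - b * (starRingEnd ℂ) c‖ =
      ‖1 - (starRingEnd ℂ) b * c‖ := by
    rw [← Complex.norm_conj (1 - (starRingEnd ℂ) b * c)]
    congr 1
    simp only [map_sub, map_one, map_mul, Complex.conj_conj]
    try ring
  have habs1 : ‖1 - (starRingEnd ℂ) b * a‖ ≠ 0 := by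
    exact norm_ne_zero_iff.mpr hd1
  have habs2 : ‖1 - (starRingEnd ℂ) b * c‖ ≠ 0 := by
    exact norm_ne_zero_iff.mpr hd2
  have habs3 : ‖1 - (starRingEnd ℂ) c * a‖ ≠ 0 := by
    exact norm_ne_zero_iff.mpr hd3
  have habs4 : ‖1 - b * (starRingEnd ℂ) c‖ ≠ 0 := by
    exact norm_ne_zero_iff.mpr hd4
  have habsb : ‖1 - (starRingEnd ℂ) b * b‖ ≠ 0 := by
    exact norm_ne_zero_iff.mpr hdb
  have key : pd a c = ‖(A - C) / (1 - (starRingEnd ℂ) C * A)‖ := by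
    rw [norm_div, e1, e2, norm_div, norm_div, norm_mul, norm_mul, norm_mul, norm_mul, h24, pd,
      norm_div]
    rw [div_div_div_eq, div_eq_div_iff habs3 (mul_ne_zero (mul_ne_zero habs1 habs2) (mul_ne_zero habs3 habsb))]
    ring
  rw [key]
  calc ‖(A - C) / (1 - (starRingEnd ℂ) C * A)‖
      ≤ (‖A‖ + ‖C‖) / (1 + ‖A‖ * ‖C‖) :=
        basic_ineq hAlt hClt
    _ ≤ (Real.tanh s + Real.tanh t) / (1 + Real.tanh s * Real.tanh t) := by
        rw [hAab, hCcb, pd_symm c b]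
        exact einstein_mono (pd_nonneg a b) (pd_nonneg b c) h1 h2 (tanh_lt_one s)
          (tanh_lt_one t)
    _ = Real.tanh (s + t) := (tanh_add s t).symm

end Stmt17Aux


open Stmt17Aux in
/-- Distortion lemma for finite Blaschke products: for each `p ∈ ℕ` there is a distortion
function `η = η_p` (increasing, positive, `η(t) → 0` as `t → 0⁺`) such that for every
finite Blaschke product `h` of degree `≤ p` and every connected set `A ⊆ 𝔻` with `0 ∈ A`
and `h(A)` contained in the closed hyperbolic ball of radius `R` centered at `0`, the set
`A` is contained in the closed hyperbolic ball of radius `η(R)` centered at `0`. -/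
theorem stmt17 (p : ℕ) (hp : 1 ≤ p) :
    ∃ η : ℝ → ℝ,
      (∀ s t : ℝ, 0 < s → s ≤ t → η s ≤ η t) ∧
      (∀ t : ℝ, 0 < t → 0 < η t) ∧
      Filter.Tendsto η (nhdsWithin 0 (Set.Ioi 0)) (nhds 0) ∧
      ∀ (h : ℂ → ℂ) (d : ℕ) (θ : ℝ) (a : Fin d → ℂ),
        1 ≤ d → d ≤ p →
        (∀ k, ‖a k‖ < 1) →
        (∀ z : ℂ, h z =
          Complex.exp ((θ : ℂ) * Complex.I) *
            ∏ k, (z - a k) / (1 - (starRingEnd ℂ) (a k) * z)) →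
        ∀ (R : ℝ) (A : Set ℂ), 0 < R →
          IsConnected A → A ⊆ Metric.ball (0 : ℂ) 1 → (0 : ℂ) ∈ A →
          h '' A ⊆ hBall R →
          A ⊆ hBall (η R) := by
  classical
  have hp0 : (0 : ℝ) < p := by exact_mod_cast hp
  have hip : (0 : ℝ) < 1 / p := by positivity
  set η : ℝ → ℝ := fun R => 4 * p * ath (Real.tanh (R / 2) ^ ((1 : ℝ) / p)) with hηdef
  refine ⟨η, ?_, ?_, ?_, ?_⟩
  · -- monotone
    intro s t hs hst
    have h1 : 0 < Real.tanh (s / 2) := tanh_pos (by linarith)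
    have h2 : Real.tanh (s / 2) ≤ Real.tanh (t / 2) := tanh_le_tanh (by linarith)
    have h3 : Real.tanh (t / 2) < 1 := Stmt17Aux.tanh_lt_one _
    have h4 : Real.tanh (s / 2) ^ ((1 : ℝ) / p) ≤ Real.tanh (t / 2) ^ ((1 : ℝ) / p) :=
      Real.rpow_le_rpow h1.le h2 hip.le
    have h5 : Real.tanh (t / 2) ^ ((1 : ℝ) / p) < 1 :=
      Real.rpow_lt_one (le_trans h1.le h2) h3 hip
    have h6 : (0 : ℝ) < Real.tanh (s / 2) ^ ((1 : ℝ) / p) := Real.rpow_pos_of_pos h1 _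
    exact mul_le_mul_of_nonneg_left (ath_le_ath (by linarith) h4 h5) (by positivity)
  · -- positive
    intro t ht
    have h1 : 0 < Real.tanh (t / 2) := tanh_pos (by linarith)
    have h6 : (0 : ℝ) < Real.tanh (t / 2) ^ ((1 : ℝ) / p) := Real.rpow_pos_of_pos h1 _
    have h5 : Real.tanh (t / 2) ^ ((1 : ℝ) / p) < 1 :=
      Real.rpow_lt_one h1.le (Stmt17Aux.tanh_lt_one _) hip
    have := ath_pos h6 h5
    have h4p : (0 : ℝ) < 4 * p := by positivity
    exact mul_pos h4p this
  · -- tendsto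
    have htanh : Continuous fun R : ℝ => Real.tanh (R / 2) := by
      have hct : Continuous Real.tanh := by
        have he : Real.tanh = fun x => Real.sinh x / Real.cosh x :=
          funext Real.tanh_eq_sinh_div_cosh
        rw [he]
        exact Real.continuous_sinh.div Real.continuous_cosh fun x => (Real.cosh_pos x).ne'
      exact hct.comp (continuous_id.div_const 2)
    have t1 : Filter.Tendsto (fun R : ℝ => Real.tanh (R / 2)) (nhds 0) (nhds 0) := by
      have h := (htanh.continuousAt (x := 0)).tendsto
      simpa using h
    have t2 : Filter.Tendsto (fun x : ℝ => x ^ ((1 : ℝ) / p)) (nhds 0) (nhds 0) := by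
      have h := (Real.continuousAt_rpow_const 0 ((1 : ℝ) / p) (Or.inr hip.le)).tendsto
      rwa [Real.zero_rpow hip.ne'] at h
    have t3 : Filter.Tendsto ath (nhds 0) (nhds 0) := by
      have h := continuousAt_ath0.tendsto
      rwa [ath_zero] at h
    have t4 : Filter.Tendsto (fun R : ℝ => ath (Real.tanh (R / 2) ^ ((1 : ℝ) / p)))
        (nhds 0) (nhds 0) := t3.comp (t2.comp t1)
    have t5 : Filter.Tendsto η (nhds 0) (nhds 0) := by
      have h := t4.const_mul (4 * (p : ℝ))
      simpa [hηdef] using h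
    exact t5.mono_left nhdsWithin_le_nhds
  · -- main property
    intro h d θ a hd1 hdp hak hh R A hR hconn hAdisk h0A himg
    have hdisk : ∀ z ∈ A, ‖z‖ < 1 := by
      intro z hz
      have := hAdisk hz
      rwa [Metric.mem_ball, Complex.dist_eq, sub_zero] at this
    set r := Real.tanh (R / 2) with hrdef
    have hr0 : 0 < r := tanh_pos (by linarith)
    have hr1 : r < 1 := Stmt17Aux.tanh_lt_one _
    set sp := r ^ ((1 : ℝ) / p) with hspdef
    have hsp0 : 0 < sp := Real.rpow_pos_of_pos hr0 _
    have hsp1 : sp < 1 := Real.rpow_lt_one hr0.le hr1 hip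
    set β := ath sp with hβdef
    have hβ0 : 0 < β := ath_pos hsp0 hsp1
    have htanhβ : Real.tanh β = sp := tanh_ath (by linarith) hsp1
    -- covering claim
    have hcov : ∀ z ∈ A, ∃ k, pd z (a k) ≤ Real.tanh β := by
      intro z hz
      have hz1 : ‖z‖ < 1 := hdisk z hz
      have himz : ‖h z‖ ≤ r := himg ⟨z, hz, rfl⟩
      have habsh : ‖h z‖ = ∏ k, pd z (a k) := by
        rw [hh z, norm_mul, Complex.norm_exp_ofReal_mul_I, one_mul, norm_prod]
        exact Finset.prod_congr rfl fun k _ => rfl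
      by_contra hq
      push_neg at hq
      rw [htanhβ] at hq
      have hprod : sp ^ d < ∏ k, pd z (a k) := by
        have := Finset.prod_lt_prod_of_nonempty (f := fun _ : Fin d => sp)
          (g := fun k => pd z (a k)) (fun k _ => hsp0) (fun k _ => hq k)
          (Finset.univ_nonempty_iff.2 ⟨⟨0, by omega⟩⟩)
        simpa [Finset.prod_const, Finset.card_univ] using this
      have hrle : r ≤ sp ^ d := by
        have h1 : (sp : ℝ) ^ d = r ^ ((1 : ℝ) / p * d) := by
          rw [hspdef, ← Real.rpow_natCast (r ^ ((1 : ℝ) / p)) d, ← Real.rpow_mul hr0.le]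
        rw [h1]
        have h2 : (1 : ℝ) / p * d ≤ 1 := by
          rw [div_mul_eq_mul_div, one_mul, div_le_one hp0]
          exact_mod_cast hdp
        calc r = r ^ (1 : ℝ) := (Real.rpow_one r).symm
          _ ≤ r ^ ((1 : ℝ) / p * d) := Real.rpow_le_rpow_of_exponent_ge hr0 hr1.le h2
      rw [habsh] at himz
      linarith
    obtain ⟨k0, hk0⟩ := hcov 0 h0A
    rw [pd_zero_left] at hk0
    -- pigeonhole: a gap
    have hgap : ∃ j ∈ Finset.Icc 1 p, ∀ k : Fin d,
        ¬(Real.tanh ((2 * (j : ℝ) - 1) * β) < ‖a k‖ ∧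
          ‖a k‖ ≤ Real.tanh ((2 * (j : ℝ) + 1) * β)) := by
      by_contra hcon
      push_neg at hcon
      have hne : Nonempty (Fin d) := ⟨⟨0, by omega⟩⟩
      choose! g hg1 hg2 using hcon
      have hinj : Set.InjOn g (Finset.Icc 1 p) := by
        have key : ∀ j1 j2 : ℕ, j1 ∈ Finset.Icc 1 p → j2 ∈ Finset.Icc 1 p → j1 < j2 →
            g j1 ≠ g j2 := by
          intro j1 j2 h1 h2 hlt he
          have e1 := hg2 j1 h1
          have e2 := hg1 j2 h2
          rw [he] at e1
          have hmono : Real.tanh ((2 * (j1 : ℝ) + 1) * β) ≤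
              Real.tanh ((2 * (j2 : ℝ) - 1) * β) := by
            apply tanh_le_tanh
            have : (j1 : ℝ) + 1 ≤ (j2 : ℝ) := by exact_mod_cast hlt
            nlinarith
          linarith
        intro j1 h1 j2 h2 he
        rcases lt_trichotomy j1 j2 with hlt | heq | hgt
        · exact absurd he (key j1 j2 (by simpa using h1) (by simpa using h2) hlt)
        · exact heq
        · exact absurd he.symm (key j2 j1 (by simpa using h2) (by simpa using h1) hgt)
      have hmaps : ∀ j ∈ Finset.Icc 1 p, g j ∈ Finset.univ.erase k0 := by
        intro j hj
        refine Finset.mem_erase.2 ⟨?_, Finset.mem_univ _⟩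
        intro he
        have e1 := hg1 j hj
        rw [he] at e1
        have hj1 : 1 ≤ j := (Finset.mem_Icc.1 hj).1
        have hmono : Real.tanh β ≤ Real.tanh ((2 * (j : ℝ) - 1) * β) := by
          apply tanh_le_tanh
          have : (1 : ℝ) ≤ (j : ℝ) := by exact_mod_cast hj1
          nlinarith
        linarith
      have hcard := Finset.card_le_card_of_injOn g hmaps hinj
      rw [Nat.card_Icc, Finset.card_erase_of_mem (Finset.mem_univ _), Finset.card_univ,
        Fintype.card_fin] at hcard
      omega
    obtain ⟨j, hjmem, hjgap⟩ := hgap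
    obtain ⟨hj1, hjp⟩ := Finset.mem_Icc.1 hjmem
    have hj1R : (1 : ℝ) ≤ (j : ℝ) := by exact_mod_cast hj1
    have hjpR : (j : ℝ) ≤ (p : ℝ) := by exact_mod_cast hjp
    set τ1 := Real.tanh ((2 * (j : ℝ) - 1) * β) with hτ1def
    set τ2 := Real.tanh ((2 * (j : ℝ) + 1) * β) with hτ2def
    set S : Set (Fin d) := {k | ‖a k‖ ≤ τ1} with hSdef
    set C : Fin d → Set ℂ := fun k =>
      {x : ℂ | ‖x - a k‖ ≤ Real.tanh β * ‖1 - (starRingEnd ℂ) (a k) * x‖}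
      with hCdef
    have hCclosed : ∀ k, IsClosed (C k) := by
      intro k
      apply isClosed_le
      · exact continuous_norm.comp (continuous_id.sub continuous_const)
      · exact continuous_const.mul (continuous_norm.comp
          (continuous_const.sub (continuous_const.mul continuous_id)))
    have hmem : ∀ (k : Fin d) (x : ℂ), ‖x‖ < 1 →
        (x ∈ C k ↔ pd x (a k) ≤ Real.tanh β) := by
      intro k x hx
      have hd0 : 0 < ‖1 - (starRingEnd ℂ) (a k) * x‖ :=
        norm_pos_iff.2 (den_ne hx (hak k))
      rw [hCdef]
      simp only [Set.mem_setOf_eq]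
      rw [pd, norm_div, div_le_iff₀ hd0]
    set U : Set ℂ := ⋃ k ∈ S, C k with hUdef
    set V : Set ℂ := ⋃ k ∈ Sᶜ, C k with hVdef
    have hUclosed : IsClosed U := Set.Finite.isClosed_biUnion (Set.toFinite S)
      fun k _ => hCclosed k
    have hVclosed : IsClosed V := Set.Finite.isClosed_biUnion (Set.toFinite Sᶜ)
      fun k _ => hCclosed k
    have hcover : A ⊆ U ∪ V := by
      intro z hz
      obtain ⟨k, hk⟩ := hcov z hz
      have hzC : z ∈ C k := (hmem k z (hdisk z hz)).2 hk
      by_cases hkS : k ∈ S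
      · exact Or.inl (Set.mem_biUnion hkS hzC)
      · exact Or.inr (Set.mem_biUnion hkS hzC)
    have hdisj : ∀ x ∈ A, x ∈ U → x ∈ V → False := by
      intro x hx hxU hxV
      obtain ⟨k, hkS, hxk⟩ := Set.mem_iUnion₂.1 hxU
      obtain ⟨k', hk'S, hxk'⟩ := Set.mem_iUnion₂.1 hxV
      have hx1 : ‖x‖ < 1 := hdisk x hx
      have p1 : pd x (a k) ≤ Real.tanh β := (hmem k x hx1).1 hxk
      have p2 : pd x (a k') ≤ Real.tanh β := (hmem k' x hx1).1 hxk'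
      have t1 : pd (a k') (a k) ≤ Real.tanh (β + β) :=
        pd_triangle (hak k') hx1 (hak k) hβ0.le hβ0.le (by rwa [pd_symm]) p1
      have habs0 : ‖(0 : ℂ)‖ < 1 := by simp
      have t2 : pd (a k') 0 ≤ Real.tanh (β + β + (2 * (j : ℝ) - 1) * β) := by
        apply pd_triangle (hak k') (hak k) habs0 (by linarith) (by nlinarith) t1
        rw [pd_zero_right]
        exact hkS
      rw [pd_zero_right] at t2
      have heq : β + β + (2 * (j : ℝ) - 1) * β = (2 * (j : ℝ) + 1) * β := by ring
      rw [heq] at t2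
      have hk'gt : τ1 < ‖a k'‖ := not_le.1 hk'S
      exact hjgap k' ⟨hk'gt, t2⟩
    have hAU : A ⊆ U := by
      by_contra hAU
      have hAV : (A ∩ V).Nonempty := by
        rw [Set.not_subset] at hAU
        obtain ⟨z, hzA, hzU⟩ := hAU
        rcases hcover hzA with hU | hV
        · exact absurd hU hzU
        · exact ⟨z, hzA, hV⟩
      have hA0U : (A ∩ U).Nonempty := by
        refine ⟨0, h0A, ?_⟩
        have hk0S : k0 ∈ S := by
          rw [hSdef]
          simp only [Set.mem_setOf_eq]
          calc ‖a k0‖ ≤ Real.tanh β := hk0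
            _ ≤ τ1 := tanh_le_tanh (by nlinarith)
        have h0C : (0 : ℂ) ∈ C k0 := by
          rw [hmem k0 0 (by simp), pd_zero_left]
          exact hk0
        exact Set.mem_biUnion hk0S h0C
      obtain ⟨x, hxA, hxUV⟩ := (isPreconnected_closed_iff.1 hconn.isPreconnected) U V
        hUclosed hVclosed hcover hA0U hAV
      exact hdisj x hxA hxUV.1 hxUV.2
    -- conclude
    intro z hz
    obtain ⟨k, hkS, hzk⟩ := Set.mem_iUnion₂.1 (hAU hz)
    have hz1 : ‖z‖ < 1 := hdisk z hz
    have p1 : pd z (a k) ≤ Real.tanh β := (hmem k z hz1).1 hzk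
    have habs0 : ‖(0 : ℂ)‖ < 1 := by simp
    have t2 : pd z 0 ≤ Real.tanh (β + (2 * (j : ℝ) - 1) * β) := by
      apply pd_triangle hz1 (hak k) habs0 hβ0.le (by nlinarith) p1
      rw [pd_zero_right]
      exact hkS
    rw [pd_zero_right] at t2
    have hfin : ‖z‖ ≤ Real.tanh (η R / 2) := by
      have hηR : η R = 4 * (p : ℝ) * β := rfl
      have hhalf : η R / 2 = 2 * (p : ℝ) * β := by rw [hηR]; ring
      rw [hhalf]
      have harg : β + (2 * (j : ℝ) - 1) * β ≤ 2 * (p : ℝ) * β := by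
        have h1 : β + (2 * (j : ℝ) - 1) * β = 2 * (j : ℝ) * β := by ring
        rw [h1]
        exact mul_le_mul_of_nonneg_right (by linarith) hβ0.le
      exact le_trans t2 (tanh_le_tanh harg)
    exact hfin
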